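/- Let f : ℝ → ℝ be a periodic, twice continuously differentiable function with f''(0) ≠ 0. Then for every n ∈ ℕ there exists α ∈ ℝ such that |G_{f,α,n+1}| ≥ n, i.e., the values f(α), f(2α), …, f((n+1)α) produce at least n distinct gap lengths. -/
import Mathlib


/-- The set of distinct values `f (d*α + β)` for `1 ≤ d ≤ N`. -/
def orbitSet (f : ℝ → ℝ) (α β : ℝ) (N : ℕ) : Set ℝ :=
  {y | ∃ d : ℕ, 1 ≤ d ∧ d ≤ N ∧ y = f (d * α + β)}

/-- Gaps between consecutive (nearest-neighbor) elements of a set of reals. -/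
def consGaps (S : Set ℝ) : Set ℝ :=
  {g | ∃ a ∈ S, ∃ b ∈ S, a < b ∧ (∀ x ∈ S, x ≤ a ∨ b ≤ x) ∧ g = b - a}

/-- The gap length set `G_{f,α,β,N}`: consecutive gaps together with the
extremal gap `s₁ - inf f + sup f - s_n`. -/
def gapSet (f : ℝ → ℝ) (α β : ℝ) (N : ℕ) : Set ℝ :=
  consGaps (orbitSet f α β N) ∪
    {sInf (orbitSet f α β N) - sInf (Set.range f) + sSup (Set.range f) -
      sSup (orbitSet f α β N)}

/-- Core combinatorial lemma: if the orbit set is enumerated by a strictly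
increasing sequence `y` on `{1, …, n+1}` whose consecutive differences are
injective, then the gap set has at least `n` elements. -/
lemma core_lemma (f : ℝ → ℝ) (α : ℝ) (n : ℕ) (y : ℕ → ℝ)
    (hS : orbitSet f α 0 (n+1) = y '' Set.Icc 1 (n+1))
    (hmono : ∀ d e : ℕ, 1 ≤ d → d < e → e ≤ n+1 → y d < y e)
    (hinj : Set.InjOn (fun d => y (d+1) - y d) (Set.Icc 1 n)) :
    n ≤ (gapSet f α 0 (n+1)).ncard := by
  have hyle : ∀ d e : ℕ, 1 ≤ d → d ≤ e → e ≤ n+1 → y d ≤ y e := by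
    intro d e h1 h2 h3
    rcases eq_or_lt_of_le h2 with h | h
    · exact le_of_eq (by rw [h])
    · exact (hmono d e h1 h h3).le
  have hSfin : (orbitSet f α 0 (n+1)).Finite := by
    rw [hS]; exact (Set.finite_Icc 1 (n+1)).image y
  have hgapsub : consGaps (orbitSet f α 0 (n+1)) ⊆
      (fun p : ℝ × ℝ => p.2 - p.1) '' ((orbitSet f α 0 (n+1)) ×ˢ (orbitSet f α 0 (n+1))) := by
    rintro g ⟨a, ha, b, hb, _, _, rfl⟩
    exact ⟨(a, b), ⟨ha, hb⟩, rfl⟩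
  have hgfin : (gapSet f α 0 (n+1)).Finite := by
    apply Set.Finite.union
    · exact ((hSfin.prod hSfin).image _).subset hgapsub
    · exact Set.finite_singleton _
  have hTsub : (fun d : ℕ => y (d+1) - y d) '' Set.Icc 1 n ⊆ gapSet f α 0 (n+1) := by
    rintro g ⟨d, ⟨hd1, hd2⟩, rfl⟩
    apply Set.mem_union_left
    refine ⟨y d, ?_, y (d+1), ?_, hmono d (d+1) hd1 (Nat.lt_succ_self d) (by omega), ?_, rfl⟩
    · rw [hS]; exact ⟨d, ⟨hd1, by omega⟩, rfl⟩
    · rw [hS]; exact ⟨d+1, ⟨by omega, by omega⟩, rfl⟩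
    · intro x hx
      rw [hS] at hx
      obtain ⟨k, ⟨hk1, hk2⟩, rfl⟩ := hx
      rcases le_or_gt k d with h | h
      · exact Or.inl (hyle k d hk1 h (by omega))
      · exact Or.inr (hyle (d+1) k (by omega) h hk2)
  have hTcard : ((fun d : ℕ => y (d+1) - y d) '' Set.Icc 1 n).ncard = n := by
    rw [Set.ncard_image_of_injOn hinj]
    rw [show (Set.Icc 1 n) = ((Finset.Icc 1 n : Finset ℕ) : Set ℕ) from (Finset.coe_Icc 1 n).symm,
      Set.ncard_coe_finset, Nat.card_Icc]
    omega
  calc n = ((fun d : ℕ => y (d+1) - y d) '' Set.Icc 1 n).ncard := hTcard.symm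
    _ ≤ _ := Set.ncard_le_ncard hTsub hgfin

theorem nonlinear_unbounded_gaps (f : ℝ → ℝ) (P : ℝ) (hP : 0 < P)
    (hper : ∀ x, f (x + P) = f x) (hf : ContDiff ℝ 2 f)
    (h0 : deriv (deriv f) 0 ≠ 0) :
    ∀ n : ℕ, ∃ α : ℝ, n ≤ (gapSet f α 0 (n + 1)).ncard := by
  intro n
  -- Differentiability facts
  have hsplit := contDiff_succ_iff_deriv.mp
    (show ContDiff ℝ ((1 : WithTop ℕ∞) + 1) f by exact_mod_cast hf)
  have hfd : Differentiable ℝ f := hsplit.1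
  have hd1 : ContDiff ℝ 1 (deriv f) := hsplit.2.2
  have hsplit2 := contDiff_one_iff_deriv.mp hd1
  have hfd1 : Differentiable ℝ (deriv f) := hsplit2.1
  have hcont2 : Continuous (deriv (deriv f)) := hsplit2.2
  have hc2 : 0 < |deriv (deriv f) 0| / 2 := by
    have : 0 < |deriv (deriv f) 0| := abs_pos.mpr h0
    linarith
  -- δ₀ on which f'' stays within |c|/2 of c
  obtain ⟨δ₀, hδ₀pos, hδ₀⟩ : ∃ δ > 0, ∀ x : ℝ, |x| < δ →
      |deriv (deriv f) x - deriv (deriv f) 0| < |deriv (deriv f) 0| / 2 := by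
    obtain ⟨δ, hδ, h⟩ := Metric.continuousAt_iff.mp (hcont2.continuousAt (x := 0))
      (|deriv (deriv f) 0| / 2) hc2
    refine ⟨δ, hδ, fun x hx => ?_⟩
    have h1 := h (show dist x 0 < δ by simpa [Real.dist_eq] using hx)
    rwa [Real.dist_eq] at h1
  -- f'' has constant sign on (-δ₀, δ₀)
  have hsign : (∀ x : ℝ, |x| < δ₀ → 0 < deriv (deriv f) x) ∨
      (∀ x : ℝ, |x| < δ₀ → deriv (deriv f) x < 0) := by
    rcases h0.lt_or_gt with h | h
    · right; intro x hx
      have h1 := (abs_lt.mp (hδ₀ x hx)).2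
      have hac : |deriv (deriv f) 0| = -(deriv (deriv f) 0) := abs_of_neg h
      linarith
    · left; intro x hx
      have h1 := (abs_lt.mp (hδ₀ x hx)).1
      have hac : |deriv (deriv f) 0| = deriv (deriv f) 0 := abs_of_pos h
      linarith
  -- f' has constant sign on some (0, δ₁)
  obtain ⟨δ₁, hδ₁pos, hδ₁le, hf'sign⟩ : ∃ δ₁ : ℝ, 0 < δ₁ ∧ δ₁ ≤ δ₀ ∧
      ((∀ x ∈ Set.Ioo (0:ℝ) δ₁, 0 < deriv f x) ∨ (∀ x ∈ Set.Ioo (0:ℝ) δ₁, deriv f x < 0)) := by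
    have habs : ∀ x : ℝ, x ∈ Set.Ioo (0:ℝ) δ₀ → |x| < δ₀ := fun x hx => by
      rw [abs_of_pos hx.1]; exact hx.2
    rcases hsign with hs | hs
    · have hmono' : StrictMonoOn (deriv f) (Set.Icc 0 δ₀) := by
        apply strictMonoOn_of_deriv_pos (convex_Icc _ _) hfd1.continuous.continuousOn
        intro x hx
        rw [interior_Icc] at hx
        exact hs x (habs x hx)
      rcases le_or_gt 0 (deriv f 0) with h | h
      · refine ⟨δ₀, hδ₀pos, le_rfl, Or.inl fun x hx => ?_⟩
        have := hmono' (Set.mem_Icc.mpr ⟨le_rfl, hδ₀pos.le⟩)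
          (Set.mem_Icc.mpr ⟨hx.1.le, hx.2.le⟩) hx.1
        linarith
      · obtain ⟨δ, hδpos, hδ⟩ : ∃ δ > 0, ∀ x : ℝ, |x| < δ → deriv f x < 0 := by
          obtain ⟨δ, h1, h2⟩ := Metric.continuousAt_iff.mp
            (hfd1.continuous.continuousAt (x := 0)) (-(deriv f 0)) (by linarith)
          refine ⟨δ, h1, fun x hx => ?_⟩
          have h3 := h2 (show dist x 0 < δ by simpa [Real.dist_eq] using hx)
          rw [Real.dist_eq] at h3
          have := (abs_lt.mp h3).2
          linarith
        refine ⟨min δ δ₀, lt_min hδpos hδ₀pos, min_le_right _ _, Or.inr fun x hx => ?_⟩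
        exact hδ x (by rw [abs_of_pos hx.1]; exact hx.2.trans_le (min_le_left _ _))
    · have hmono' : StrictAntiOn (deriv f) (Set.Icc 0 δ₀) := by
        apply strictAntiOn_of_deriv_neg (convex_Icc _ _) hfd1.continuous.continuousOn
        intro x hx
        rw [interior_Icc] at hx
        exact hs x (habs x hx)
      rcases le_or_gt (deriv f 0) 0 with h | h
      · refine ⟨δ₀, hδ₀pos, le_rfl, Or.inr fun x hx => ?_⟩
        have := hmono' (Set.mem_Icc.mpr ⟨le_rfl, hδ₀pos.le⟩)
          (Set.mem_Icc.mpr ⟨hx.1.le, hx.2.le⟩) hx.1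
        linarith
      · obtain ⟨δ, hδpos, hδ⟩ : ∃ δ > 0, ∀ x : ℝ, |x| < δ → 0 < deriv f x := by
          obtain ⟨δ, h1, h2⟩ := Metric.continuousAt_iff.mp
            (hfd1.continuous.continuousAt (x := 0)) (deriv f 0) h
          refine ⟨δ, h1, fun x hx => ?_⟩
          have h3 := h2 (show dist x 0 < δ by simpa [Real.dist_eq] using hx)
          rw [Real.dist_eq] at h3
          have := (abs_lt.mp h3).1
          linarith
        refine ⟨min δ δ₀, lt_min hδpos hδ₀pos, min_le_right _ _, Or.inl fun x hx => ?_⟩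
        exact hδ x (by rw [abs_of_pos hx.1]; exact hx.2.trans_le (min_le_left _ _))
  -- f is strictly monotone (one way or another) on [0, δ₁]
  have hfmono : StrictMonoOn f (Set.Icc 0 δ₁) ∨ StrictAntiOn f (Set.Icc 0 δ₁) := by
    rcases hf'sign with h | h
    · left
      apply strictMonoOn_of_deriv_pos (convex_Icc _ _) hfd.continuous.continuousOn
      intro x hx; rw [interior_Icc] at hx; exact h x hx
    · right
      apply strictAntiOn_of_deriv_neg (convex_Icc _ _) hfd.continuous.continuousOn
      intro x hx; rw [interior_Icc] at hx; exact h x hx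
  set α := δ₁ / (n + 2) with hα
  have hαpos : 0 < α := by positivity
  have hαsum : ((n : ℝ) + 2) * α = δ₁ := by
    rw [hα]; field_simp
  refine ⟨α, ?_⟩
  -- the difference function D
  set D : ℝ → ℝ := fun x => f (x + α) - f x with hD
  have hDd : ∀ x : ℝ, HasDerivAt D (deriv f (x + α) - deriv f x) x := by
    intro x
    have h1 : HasDerivAt (fun y => f (y + α)) (deriv f (x + α)) x :=
      HasDerivAt.comp_add_const x α ((hfd (x + α)).hasDerivAt)
    exact h1.sub (hfd x).hasDerivAt
  have hDderiv : ∀ x, deriv D x = deriv f (x + α) - deriv f x := fun x => (hDd x).deriv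
  have hDcont : Continuous D :=
    (hfd.continuous.comp (continuous_id.add continuous_const)).sub hfd.continuous
  -- the key MVT estimate
  have hkey : ∀ x ∈ Set.Ioo (0:ℝ) (((n:ℝ)+1) * α), ∃ ξ : ℝ, |ξ| < δ₀ ∧
      deriv D x = deriv (deriv f) ξ * α := by
    intro x hx
    obtain ⟨ξ, hξ, hξ'⟩ := exists_deriv_eq_slope (f := deriv f) (a := x) (b := x + α)
      (by linarith) hfd1.continuous.continuousOn hfd1.differentiableOn
    refine ⟨ξ, ?_, ?_⟩
    · have h1 : 0 < ξ := lt_trans hx.1 hξ.1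
      have h2 : ξ < x + α := hξ.2
      have h3 : x + α < ((n:ℝ)+2) * α := by have := hx.2; nlinarith
      rw [abs_of_pos h1]
      calc ξ < x + α := h2
        _ < ((n:ℝ)+2) * α := h3
        _ = δ₁ := hαsum
        _ ≤ δ₀ := hδ₁le
    · rw [hDderiv, hξ', show x + α - x = α by ring, div_mul_cancel₀ _ hαpos.ne']
  -- D is strictly monotone (one way or another) on [0, (n+1)α]
  have hDmono : StrictMonoOn D (Set.Icc 0 (((n:ℝ)+1) * α)) ∨
      StrictAntiOn D (Set.Icc 0 (((n:ℝ)+1) * α)) := by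
    rcases hsign with hs | hs
    · left
      apply strictMonoOn_of_deriv_pos (convex_Icc _ _) hDcont.continuousOn
      intro x hx; rw [interior_Icc] at hx
      obtain ⟨ξ, hξ, heq⟩ := hkey x hx
      rw [heq]
      exact mul_pos (hs ξ hξ) hαpos
    · right
      apply strictAntiOn_of_deriv_neg (convex_Icc _ _) hDcont.continuousOn
      intro x hx; rw [interior_Icc] at hx
      obtain ⟨ξ, hξ, heq⟩ := hkey x hx
      rw [heq]
      exact mul_neg_of_neg_of_pos (hs ξ hξ) hαpos
  -- injectivity of d ↦ D(dα) on {1,…,n}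
  have hmem : ∀ k : ℕ, k ≤ n → ((k:ℝ) * α) ∈ Set.Icc (0:ℝ) (((n:ℝ)+1) * α) := by
    intro k hk
    constructor
    · positivity
    · apply mul_le_mul_of_nonneg_right _ hαpos.le
      have : (k:ℝ) ≤ n := by exact_mod_cast hk
      linarith
  have hinjD : Set.InjOn (fun d : ℕ => D ((d:ℝ) * α)) (Set.Icc 1 n) := by
    have key : ∀ a b : ℕ, a ∈ Set.Icc 1 n → b ∈ Set.Icc 1 n → a < b →
        D ((a:ℝ) * α) ≠ D ((b:ℝ) * α) := by
      intro a b ha hb hab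
      have h1 : (a:ℝ) * α < (b:ℝ) * α := by
        apply mul_lt_mul_of_pos_right _ hαpos
        exact_mod_cast hab
      rcases hDmono with hm | hm
      · exact (hm (hmem a ha.2) (hmem b hb.2) h1).ne
      · exact (hm (hmem a ha.2) (hmem b hb.2) h1).ne'
    intro a ha b hb h
    by_contra hne
    rcases Nat.lt_or_ge a b with hlt | hge
    · exact key a b ha hb hlt h
    · exact key b a hb ha (by omega) h.symm
  -- membership of points d*α in Icc 0 δ₁, for d ≤ n+1
  have hmemδ : ∀ k : ℕ, k ≤ n + 1 → ((k:ℝ) * α) ∈ Set.Icc (0:ℝ) δ₁ := by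
    intro k hk
    constructor
    · positivity
    · rw [← hαsum]
      apply mul_le_mul_of_nonneg_right _ hαpos.le
      have : (k:ℝ) ≤ (n:ℝ) + 1 := by exact_mod_cast hk
      linarith
  rcases hfmono with hm | hm
  · -- increasing case: y d = f(dα)
    apply core_lemma f α n (fun d : ℕ => f ((d:ℝ) * α))
    · ext x
      simp only [orbitSet, Set.mem_setOf_eq, Set.mem_image, Set.mem_Icc, add_zero]
      constructor
      · rintro ⟨d, h1, h2, rfl⟩; exact ⟨d, ⟨h1, h2⟩, rfl⟩
      · rintro ⟨d, ⟨h1, h2⟩, rfl⟩; exact ⟨d, h1, h2, rfl⟩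
    · intro d e h1 h2 h3
      apply hm (hmemδ d (by omega)) (hmemδ e h3)
      apply mul_lt_mul_of_pos_right _ hαpos
      exact_mod_cast h2
    · have hfun : (fun d : ℕ => (fun d : ℕ => f ((d:ℝ) * α)) (d+1) - (fun d : ℕ => f ((d:ℝ) * α)) d)
          = fun d : ℕ => D ((d:ℝ) * α) := by
        funext d
        show f (((d+1 : ℕ) : ℝ) * α) - f ((d:ℝ) * α) = D ((d:ℝ) * α)
        rw [hD]
        simp only
        rw [show (((d+1 : ℕ) : ℝ)) * α = (d:ℝ) * α + α by push_cast; ring]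
      rw [hfun]
      exact hinjD
  · -- decreasing case: y d = f((n+2-d)α)
    apply core_lemma f α n (fun d : ℕ => f (((n + 2 - d : ℕ) : ℝ) * α))
    · ext x
      simp only [orbitSet, Set.mem_setOf_eq, Set.mem_image, Set.mem_Icc, add_zero]
      constructor
      · rintro ⟨d, h1, h2, rfl⟩
        refine ⟨n + 2 - d, ⟨by omega, by omega⟩, ?_⟩
        have : n + 2 - (n + 2 - d) = d := by omega
        rw [this]
      · rintro ⟨d, ⟨h1, h2⟩, rfl⟩
        exact ⟨n + 2 - d, by omega, by omega, rfl⟩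
    · intro d e h1 h2 h3
      have hsub : n + 2 - e < n + 2 - d := by omega
      apply hm (hmemδ (n + 2 - e) (by omega)) (hmemδ (n + 2 - d) (by omega))
      apply mul_lt_mul_of_pos_right _ hαpos
      exact_mod_cast hsub
    · intro a ha b hb h
      simp only [Set.mem_Icc] at ha hb
      have hcast : ∀ d : ℕ, 1 ≤ d → d ≤ n →
          f (((n + 2 - (d+1) : ℕ) : ℝ) * α) - f (((n + 2 - d : ℕ) : ℝ) * α) =
          -(D (((n + 1 - d : ℕ) : ℝ) * α)) := by
        intro d hd1 hd2
        have e1 : (n + 2 - (d+1) : ℕ) = (n + 1 - d : ℕ) := by omega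
        have e2 : (((n + 2 - d : ℕ) : ℝ)) = ((n + 1 - d : ℕ) : ℝ) + 1 := by
          have h' : (n + 2 - d : ℕ) = (n + 1 - d : ℕ) + 1 := by omega
          rw [h']; push_cast; ring
        rw [e1, e2, hD]
        simp only
        rw [show (((n + 1 - d : ℕ) : ℝ) + 1) * α = ((n + 1 - d : ℕ) : ℝ) * α + α by ring]
        ring
      have ha' := hcast a ha.1 ha.2
      have hb' := hcast b hb.1 hb.2
      simp only at h
      rw [ha', hb'] at h
      have h2 : D (((n + 1 - a : ℕ) : ℝ) * α) = D (((n + 1 - b : ℕ) : ℝ) * α) := by linarith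
      have := hinjD (by simp only [Set.mem_Icc]; omega) (by simp only [Set.mem_Icc]; omega) h2
      omega
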